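/- Let (R, C, ∂, tr) be a Poisson trace order over a field k such that C is a finitely generated k-algebra, and let ℓ be a positive integer. If m and n are maximal ideals of C lying in the same symplectic core, i.e. P(m) = P(n), then MD_ℓ(R/C, tr) ⊆ m if and only if MD_ℓ(R/C, tr) ⊆ n. In other words, the zero locus of the modified ℓ-discriminant ideal is a union of symplectic cores of MaxSpec C. -/
import Mathlib

open Matrix Finset

section Aux
variable {k C : Type*} [CommRing k] [CommRing C] [Algebra k C]
variable {ι : Type*} [Fintype ι] [DecidableEq ι]

lemma myDeriv_prod (D : C →ₗ[k] C) (hD : ∀ a b, D (a*b) = D a * b + a * D b)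
    (s : Finset ι) (f : ι → C) :
    D (∏ i ∈ s, f i) = ∑ i ∈ s, D (f i) * ∏ j ∈ s.erase i, f j := by
  classical
  induction s using Finset.induction_on with
  | empty =>
      simp only [Finset.prod_empty, Finset.sum_empty]
      have h := hD 1 1
      simp only [mul_one, one_mul] at h
      have h0 : D (1:C) = 0 := left_eq_add.mp h
      simpa using h0
  | @insert a s ha ih =>
      rw [Finset.prod_insert ha, hD, ih, Finset.sum_insert ha, Finset.erase_insert ha,
        Finset.mul_sum]
      congr 1
      refine Finset.sum_congr rfl fun i hi => ?_
      rw [Finset.erase_insert_of_ne (by rintro rfl; exact ha hi),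
        Finset.prod_insert (by simp [ha])]
      ring

lemma myDeriv_det (D : C →ₗ[k] C) (hD : ∀ a b, D (a*b) = D a * b + a * D b)
    (M : Matrix ι ι C) :
    D M.det = ∑ i, (M.updateRow i (fun j => D (M i j))).det := by
  classical
  simp only [Matrix.det_apply, Units.smul_def, map_sum, map_zsmul]
  calc ∑ σ : Equiv.Perm ι, (Equiv.Perm.sign σ : ℤ) • D (∏ p, M (σ p) p)
      = ∑ σ : Equiv.Perm ι, ∑ p, (Equiv.Perm.sign σ : ℤ) •
          (D (M (σ p) p) * ∏ q ∈ Finset.univ.erase p, M (σ q) q) := by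
        refine Finset.sum_congr rfl fun σ _ => ?_
        rw [myDeriv_prod D hD, Finset.smul_sum]
    _ = ∑ σ : Equiv.Perm ι, ∑ i, (Equiv.Perm.sign σ : ℤ) •
          ∏ p, (M.updateRow i (fun j => D (M i j))) (σ p) p := by
        refine Finset.sum_congr rfl fun σ _ => ?_
        rw [← Equiv.sum_comp σ (fun i => (Equiv.Perm.sign σ : ℤ) •
          ∏ p, (M.updateRow i (fun j => D (M i j))) (σ p) p)]
        refine Finset.sum_congr rfl fun p _ => ?_
        congr 1
        rw [← Finset.mul_prod_erase Finset.univ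
          (fun q => (M.updateRow (σ p) (fun j => D (M (σ p) j))) (σ q) q) (Finset.mem_univ p)]
        congr 1
        · simp [Matrix.updateRow_self]
        · refine Finset.prod_congr rfl fun q hq => ?_
          have hne : σ q ≠ σ p := fun h => (Finset.mem_erase.mp hq).1 (σ.injective h)
          rw [Matrix.updateRow_ne hne]
    _ = ∑ i, ∑ σ : Equiv.Perm ι, (Equiv.Perm.sign σ : ℤ) •
          ∏ p, (M.updateRow i (fun j => D (M i j))) (σ p) p := Finset.sum_comm

lemma sum_det_updateRow_eq_sum_det_updateCol (M : Matrix ι ι C) (b : ι → ι → C) :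
    ∑ i, (M.updateRow i (b i)).det = ∑ j, (M.updateCol j (fun i => b i j)).det := by
  classical
  have h1 : ∀ i, (M.updateRow i (b i)).det = ∑ j, M.adjugate j i * b i j := by
    intro i
    rw [← Matrix.cramer_transpose_apply, Matrix.cramer_eq_adjugate_mulVec,
      Matrix.mulVec, dotProduct]
    refine Finset.sum_congr rfl fun j _ => ?_
    rw [← Matrix.adjugate_transpose]
    rfl
  have h2 : ∀ j, (M.updateCol j (fun i => b i j)).det = ∑ i, M.adjugate j i * b i j := by
    intro j
    rw [← Matrix.cramer_apply, Matrix.cramer_eq_adjugate_mulVec, Matrix.mulVec,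
      dotProduct]
  simp only [h1, h2]
  exact Finset.sum_comm

end Aux


/-- The modified `ℓ`-discriminant ideal `MD_ℓ(R/C, tr)`: the ideal of `C` generated by the
elements `det((tr(rᵢ sⱼ))ᵢⱼ)` over all `ℓ`-tuples `(r₁,…,r_ℓ)`, `(s₁,…,s_ℓ)` in `R`. -/
def modifiedDiscriminantIdeal {C R : Type*} [CommRing C] [Ring R] [Algebra C R]
    (tr : R →ₗ[C] C) (ℓ : ℕ) : Ideal C :=
  Ideal.span { x : C | ∃ r s : Fin ℓ → R,
    x = Matrix.det (Matrix.of fun i j => tr (r i * s j)) }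

/-- `P(I)`: the largest Poisson ideal of `C` contained in the ideal `I`, i.e. the sum of
all Poisson ideals contained in `I`. -/
def poissonCore {k C : Type*} [CommRing k] [CommRing C] [Algebra k C]
    (bracket : C →ₗ[k] C →ₗ[k] C) (I : Ideal C) : Ideal C :=
  sSup { J : Ideal C | (∀ c : C, ∀ x ∈ J, bracket c x ∈ J) ∧ J ≤ I }

/-- For a Poisson trace order `(R, C, ∂, tr)` over a field `k` with `C` a finitely
generated `k`-algebra, the zero locus of the modified `ℓ`-discriminant ideal is a union
of symplectic cores: if maximal ideals `m, n` of `C` satisfy `P(m) = P(n)`, then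
`MD_ℓ(R/C,tr) ⊆ m ↔ MD_ℓ(R/C,tr) ⊆ n`. -/
theorem modifiedDiscriminantIdeal_zeroLocus_union_symplecticCores
    {k R C : Type*} [Field k]
    [Ring R] [Algebra k R]
    [CommRing C] [Algebra k C] [Algebra C R] [IsScalarTower k C R]
    (hinj : Function.Injective (algebraMap C R))
    [Module.Finite C R] [Algebra.FiniteType k C]
    -- the Poisson bracket on `C`
    (bracket : C →ₗ[k] C →ₗ[k] C)
    (hanti : ∀ a b : C, bracket a b = - bracket b a)
    (hjacobi : ∀ a b c : C,
      bracket a (bracket b c) + bracket b (bracket c a) + bracket c (bracket a b) = 0)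
    (hleibniz : ∀ a b c : C, bracket a (b * c) = bracket a b * c + b * bracket a c)
    -- the map `∂ : C → Der_k(R)`
    (par : C →ₗ[k] R →ₗ[k] R)
    (hder : ∀ (c : C) (x y : R), par c (x * y) = par c x * y + x * par c y)
    (hres : ∀ c a : C, par c (algebraMap C R a) = algebraMap C R (bracket c a))
    -- the trace map, compatible with `∂`
    (tr : R →ₗ[C] C) (hcyc : ∀ x y : R, tr (x * y) = tr (y * x))
    (hcompat : ∀ (c : C) (r : R), tr (par c r) = bracket c (tr r))
    (ℓ : ℕ) (hℓ : 0 < ℓ)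
    (m n : Ideal C) (hm : m.IsMaximal) (hn : n.IsMaximal)
    (hcore : poissonCore bracket m = poissonCore bracket n) :
    modifiedDiscriminantIdeal tr ℓ ≤ m ↔ modifiedDiscriminantIdeal tr ℓ ≤ n := by
  classical
  set MD := modifiedDiscriminantIdeal tr ℓ with hMD
  -- generators are stable under the bracket
  have hgen : ∀ (c : C) (r s : Fin ℓ → R),
      bracket c (Matrix.det (Matrix.of fun i j => tr (r i * s j))) ∈ MD := by
    intro c r s
    set M : Matrix (Fin ℓ) (Fin ℓ) C := Matrix.of fun i j => tr (r i * s j) with hM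
    rw [myDeriv_det (bracket c) (hleibniz c) M]
    have hsplit : ∀ i, (fun j => bracket c (M i j)) =
        (fun j => tr (par c (r i) * s j)) + (fun j => tr (r i * par c (s j))) := by
      intro i
      funext j
      have : M i j = tr (r i * s j) := rfl
      rw [this, ← hcompat, hder]
      simp
    have hterm : ∀ i : Fin ℓ, (M.updateRow i fun j => bracket c (M i j)).det
        = (M.updateRow i fun j => tr (par c (r i) * s j)).det
          + (M.updateRow i fun j => tr (r i * par c (s j))).det := by
      intro i
      rw [hsplit i, Matrix.det_updateRow_add]
    simp only [hterm]
    rw [Finset.sum_add_distrib]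
    refine Ideal.add_mem _ ?_ ?_
    · refine Ideal.sum_mem _ fun i _ => ?_
      have heq : M.updateRow i (fun j => tr (par c (r i) * s j)) =
          Matrix.of fun p j => tr (Function.update r i (par c (r i)) p * s j) := by
        ext p j
        by_cases hp : p = i
        · subst hp
          rw [Matrix.updateRow_self]
          simp
        · rw [Matrix.updateRow_ne hp]
          simp [hM, Function.update_of_ne hp]
      rw [heq]
      exact Ideal.subset_span ⟨_, _, rfl⟩
    · rw [sum_det_updateRow_eq_sum_det_updateCol M (fun i j => tr (r i * par c (s j)))]
      refine Ideal.sum_mem _ fun j _ => ?_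
      have heq : M.updateCol j (fun i => tr (r i * par c (s j))) =
          Matrix.of fun p q => tr (r p * Function.update s j (par c (s j)) q) := by
        ext p q
        by_cases hq : q = j
        · subst hq
          rw [Matrix.updateCol_self]
          simp
        · rw [Matrix.updateCol_ne hq]
          simp [hM, Function.update_of_ne hq]
      rw [heq]
      exact Ideal.subset_span ⟨_, _, rfl⟩
  -- MD is a Poisson ideal
  have hP : ∀ (c : C), ∀ x ∈ MD, bracket c x ∈ MD := by
    intro c x hx
    refine Submodule.span_induction (p := fun x _ => bracket c x ∈ MD)
      ?_ ?_ ?_ ?_ hx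
    · rintro y ⟨r, s, rfl⟩
      exact hgen c r s
    · simp
    · intro y z _ _ hy hz
      rw [map_add]
      exact Ideal.add_mem _ hy hz
    · intro a y hymem hy
      have hyMD : y ∈ MD := hymem
      rw [smul_eq_mul, hleibniz]
      exact Ideal.add_mem _ (Ideal.mul_mem_left _ _ hyMD) (Ideal.mul_mem_left _ _ hy)
  -- conclude
  have hsub : ∀ I : Ideal C, I.IsMaximal → MD ≤ I → MD ≤ poissonCore bracket I := by
    intro I _ hMDI
    exact le_sSup ⟨hP, hMDI⟩
  have hcle : ∀ I : Ideal C, poissonCore bracket I ≤ I := by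
    intro I
    exact sSup_le fun J hJ => hJ.2
  constructor
  · intro h
    exact le_trans (le_trans (hsub m hm h) (le_of_eq hcore)) (hcle n)
  · intro h
    exact le_trans (le_trans (hsub n hn h) (le_of_eq hcore.symm)) (hcle m)
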